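/- Let G : ℝ^N → ℝ be twice continuously differentiable, γ > 0, define F : ℝ^N × ℝ^N → ℝ^N × ℝ^N by F(u, v) = (−v, γv + ∇G(u)), and for λ ≥ 0 define E_λ(u, v) = ½‖v‖² + G(u) + λ⟨∇G(u), v⟩. Then for every R > 0 there exists λ₀ > 0 with the following properties: (1) for every λ ∈ (0, λ₀) there exists α > 0 such that ⟨∇E_λ(u, v), F(u, v)⟩ ≥ α·‖∇E_λ(u, v)‖·‖F(u, v)‖ for all (u, v) ∈ B̄(0, R) × ℝ^N; (2) for every λ ∈ [0, λ₀), the set of points (u, v) ∈ B̄(0, R) × ℝ^N with ∇E_λ(u, v) = 0 coincides with the set of points (u, v) ∈ B̄(0, R) × ℝ^N with F(u, v) = 0. -/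

import Mathlib

open Real Set Metric Filter Topology RealInnerProductSpace

noncomputable section

/-- The vector field `F(u, v) = (-v, γ v + ∇G(u))` associated with the damped second order
system `u'' + γ u' + ∇G(u) = 0`, in the phase space `ℝ^N × ℝ^N`. -/
def Fvec {N : ℕ} (G : EuclideanSpace ℝ (Fin N) → ℝ) (γ : ℝ)
    (u v : EuclideanSpace ℝ (Fin N)) :
    EuclideanSpace ℝ (Fin N) × EuclideanSpace ℝ (Fin N) :=
  (-v, γ • v + gradient G u)

/-- The deformed energy `E_λ(u, v) = ½‖v‖² + G(u) + λ⟨∇G(u), v⟩`. -/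
def Elam {N : ℕ} (G : EuclideanSpace ℝ (Fin N) → ℝ) (lam : ℝ)
    (u v : EuclideanSpace ℝ (Fin N)) : ℝ :=
  (1 / 2) * ‖v‖ ^ 2 + G u + lam * ⟪gradient G u, v⟫

/-- The full gradient of `E_λ` at `(u, v)` with respect to the product Euclidean inner
product: `∇E_λ(u, v) = (∇G(u) + λ∇²G(u)v, v + λ∇G(u))`. -/
def gradElam {N : ℕ} (G : EuclideanSpace ℝ (Fin N) → ℝ) (lam : ℝ)
    (u v : EuclideanSpace ℝ (Fin N)) :
    EuclideanSpace ℝ (Fin N) × EuclideanSpace ℝ (Fin N) :=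
  (gradient G u + lam • (fderiv ℝ (gradient G) u v), v + lam • gradient G u)

/-- The product Euclidean inner product of two pairs. -/
def pinner {N : ℕ}
    (p q : EuclideanSpace ℝ (Fin N) × EuclideanSpace ℝ (Fin N)) : ℝ :=
  ⟪p.1, q.1⟫ + ⟪p.2, q.2⟫

/-- The product Euclidean norm of a pair. -/
def pnorm {N : ℕ} (p : EuclideanSpace ℝ (Fin N) × EuclideanSpace ℝ (Fin N)) : ℝ :=
  Real.sqrt (‖p.1‖ ^ 2 + ‖p.2‖ ^ 2)


lemma pnorm_nonneg' {N : ℕ} (p : EuclideanSpace ℝ (Fin N) × EuclideanSpace ℝ (Fin N)) :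
    0 ≤ pnorm p := Real.sqrt_nonneg _

lemma pnorm_le' {N : ℕ} (p : EuclideanSpace ℝ (Fin N) × EuclideanSpace ℝ (Fin N)) :
    pnorm p ≤ ‖p.1‖ + ‖p.2‖ := by
  rw [pnorm, show ‖p.1‖ + ‖p.2‖ = Real.sqrt ((‖p.1‖ + ‖p.2‖)^2) from
    (Real.sqrt_sq (by positivity)).symm]
  apply Real.sqrt_le_sqrt
  nlinarith [norm_nonneg p.1, norm_nonneg p.2, mul_nonneg (norm_nonneg p.1) (norm_nonneg p.2)]

lemma pinner_eq' {N : ℕ} (G : EuclideanSpace ℝ (Fin N) → ℝ) (lam γ : ℝ)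
    (u v : EuclideanSpace ℝ (Fin N)) :
    pinner (gradElam G lam u v) (Fvec G γ u v) =
      γ*‖v‖^2 + lam*‖gradient G u‖^2 - lam * ⟪fderiv ℝ (gradient G) u v, v⟫
        + lam*γ*⟪gradient G u, v⟫ := by
  simp only [pinner, gradElam, Fvec, inner_add_left, inner_add_right, inner_smul_left,
    inner_smul_right, inner_neg_right, real_inner_self_eq_norm_sq, conj_trivial]
  rw [real_inner_comm v (gradient G u)]
  ring

lemma arith1 (γ lam K L m P Q a b pin : ℝ) (hγ : 0 < γ) (hl0 : 0 < lam)
    (hK0 : 0 < K) (hL0 : 0 < L) (hm : m = min (γ/2) (lam/2))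
    (ha0 : 0 ≤ a) (hb0 : 0 ≤ b) (hP0 : 0 ≤ P) (hQ0 : 0 ≤ Q)
    (hP : P ≤ K*(a+b)) (hQ : Q ≤ L*(a+b))
    (hkey : (γ/2)*b^2 + (lam/2)*a^2 ≤ pin) :
    m/(2*K*L) * (P*Q) ≤ pin := by
  have hm0 : 0 < m := by rw [hm]; exact lt_min (by positivity) (by positivity)
  have step1 : P * Q ≤ (K*(a+b)) * (L*(a+b)) := mul_le_mul hP hQ hQ0 (by positivity)
  have step2 : (K*(a+b)) * (L*(a+b)) ≤ 2*K*L*(a^2+b^2) := by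
    nlinarith [sq_nonneg (a-b), mul_pos hK0 hL0]
  have step3 : m/(2*K*L) * (P*Q) ≤ m/(2*K*L) * (2*K*L*(a^2+b^2)) :=
    mul_le_mul_of_nonneg_left (step1.trans step2) (by positivity)
  have step4 : m/(2*K*L) * (2*K*L*(a^2+b^2)) = m * (a^2+b^2) := by
    field_simp
  have h1 : m ≤ γ/2 := hm ▸ min_le_left _ _
  have h2 : m ≤ lam/2 := hm ▸ min_le_right _ _
  have step5 : m * (a^2+b^2) ≤ (γ/2)*b^2 + (lam/2)*a^2 := by
    nlinarith [sq_nonneg a, sq_nonneg b]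
  linarith [step4 ▸ step3]

set_option maxHeartbeats 1000000 in
theorem stmt11 {N : ℕ} (G : EuclideanSpace ℝ (Fin N) → ℝ) (hG : ContDiff ℝ 2 G)
    (γ : ℝ) (hγ : 0 < γ) :
    ∀ R > (0:ℝ), ∃ lam₀ > (0:ℝ),
      (∀ lam ∈ Ioo (0:ℝ) lam₀, ∃ α > (0:ℝ), ∀ u v : EuclideanSpace ℝ (Fin N),
        u ∈ closedBall (0 : EuclideanSpace ℝ (Fin N)) R →
          α * (pnorm (gradElam G lam u v) * pnorm (Fvec G γ u v)) ≤
            pinner (gradElam G lam u v) (Fvec G γ u v)) ∧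
      (∀ lam ∈ Ico (0:ℝ) lam₀, ∀ u v : EuclideanSpace ℝ (Fin N),
        u ∈ closedBall (0 : EuclideanSpace ℝ (Fin N)) R →
          (gradElam G lam u v = 0 ↔ Fvec G γ u v = 0)) := by
  intro R hR
  have hgrad : ContDiff ℝ 1 (gradient G) := by
    have h1 : ContDiff ℝ 1 (fderiv ℝ G) := hG.fderiv_right (by norm_num)
    exact (InnerProductSpace.toDual ℝ (EuclideanSpace ℝ (Fin N))).symm.contDiff.comp h1
  have hcont : Continuous (fun u => fderiv ℝ (gradient G) u) := hgrad.continuous_fderiv one_ne_zero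
  obtain ⟨M₀, hM₀⟩ := IsCompact.exists_bound_of_continuousOn
    (isCompact_closedBall (0 : EuclideanSpace ℝ (Fin N)) R) hcont.continuousOn
  set M : ℝ := max M₀ 0 with hMdef
  have hM : ∀ u ∈ closedBall (0 : EuclideanSpace ℝ (Fin N)) R,
      ‖fderiv ℝ (gradient G) u‖ ≤ M := fun u hu => (hM₀ u hu).trans (le_max_left _ _)
  have hM0 : (0:ℝ) ≤ M := le_max_right _ _
  clear_value M
  clear hMdef hM₀
  set c : ℝ := M + γ^2/2 with hcdef
  have hc0 : (0:ℝ) ≤ c := by rw [hcdef]; positivity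
  set lam₀ : ℝ := γ / (2*c + 1) with hlamdef
  have hlam₀ : 0 < lam₀ := by
    rw [hlamdef]; apply div_pos hγ; linarith
  clear_value c lam₀
  -- key lower bound
  have key : ∀ lam, 0 ≤ lam → lam < lam₀ →
      ∀ u ∈ closedBall (0 : EuclideanSpace ℝ (Fin N)) R, ∀ v,
      (γ/2)*‖v‖^2 + (lam/2)*‖gradient G u‖^2 ≤
        pinner (gradElam G lam u v) (Fvec G γ u v) := by
    intro lam hl0 hl u hu v
    rw [pinner_eq']
    rw [hlamdef] at hl
    have hlc : lam * (2*c + 1) < γ := (lt_div_iff₀ (by linarith)).mp hl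
    rw [hcdef] at hlc
    have hlc2 : lam*M + lam*(γ^2/2) ≤ γ/2 := by nlinarith
    set g := gradient G u with hgdef
    set A := fderiv ℝ (gradient G) u with hAdef
    set a := ‖g‖ with hadef
    set b := ‖v‖ with hbdef
    have ha0 : 0 ≤ a := norm_nonneg _
    have hb0 : 0 ≤ b := norm_nonneg _
    have h1 : ⟪A v, v⟫ ≤ M * b^2 := by
      calc ⟪A v, v⟫ ≤ ‖A v‖ * ‖v‖ := real_inner_le_norm _ _
        _ ≤ (M * ‖v‖) * ‖v‖ := by
            apply mul_le_mul_of_nonneg_right _ (norm_nonneg v)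
            exact (A.le_opNorm v).trans (mul_le_mul_of_nonneg_right (hM u hu) (norm_nonneg v))
        _ = M * b^2 := by rw [hbdef]; ring
    have h2 : -(a * b) ≤ ⟪g, v⟫ := by
      rw [hadef, hbdef]; exact neg_le_of_abs_le (abs_real_inner_le_norm g v)
    set i1 : ℝ := ⟪A v, v⟫ with hi1
    set i2 : ℝ := ⟪g, v⟫ with hi2
    clear_value a b i1 i2
    nlinarith [mul_le_mul_of_nonneg_left h1 hl0,
      mul_le_mul_of_nonneg_left h2 (mul_nonneg hl0 hγ.le),
      mul_nonneg hl0 (sq_nonneg (a - γ*b)),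
      mul_le_mul_of_nonneg_right hlc2 (sq_nonneg b)]
  refine ⟨lam₀, hlam₀, ?_, ?_⟩
  · -- part (1)
    rintro lam ⟨hl0, hl⟩
    set K : ℝ := 1 + lam₀ * (M + 1) with hKdef
    set L : ℝ := 2 + γ with hLdef
    have hK0 : 0 < K := by
      have := mul_nonneg hlam₀.le (by linarith : (0:ℝ) ≤ M + 1)
      rw [hKdef]; linarith
    have hL0 : 0 < L := by rw [hLdef]; linarith
    clear_value K L
    set m : ℝ := min (γ/2) (lam/2) with hmdef
    have hm0 : 0 < m := by
      rw [hmdef]; exact lt_min (by linarith) (by linarith)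
    clear_value m
    refine ⟨m / (2*K*L), div_pos hm0 (by nlinarith), ?_⟩
    intro u v hu
    have hkey := key lam hl0.le hl u hu v
    set g := gradient G u with hgdef
    set A := fderiv ℝ (gradient G) u with hAdef
    set a := ‖g‖ with hadef
    set b := ‖v‖ with hbdef
    have ha0 : 0 ≤ a := norm_nonneg _
    have hb0 : 0 ≤ b := norm_nonneg _
    have hAv : ‖A v‖ ≤ M * b :=
      (A.le_opNorm v).trans (mul_le_mul_of_nonneg_right (hM u hu) (norm_nonneg v))
    have hll : lam ≤ lam₀ := hl.le
    have hP1 : pnorm (gradElam G lam u v) ≤ K * (a + b) := by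
      refine (pnorm_le' _).trans ?_
      have e1 : ‖(gradElam G lam u v).1‖ ≤ a + lam * (M * b) := by
        simp only [gradElam, ← hgdef, ← hAdef, hadef]
        refine (norm_add_le _ _).trans ?_
        rw [norm_smul, Real.norm_eq_abs, abs_of_nonneg hl0.le]
        exact add_le_add_right (mul_le_mul_of_nonneg_left hAv hl0.le) _
      have e2 : ‖(gradElam G lam u v).2‖ ≤ b + lam * a := by
        simp only [gradElam, ← hgdef, hadef, hbdef]
        refine (norm_add_le _ _).trans ?_
        rw [norm_smul, Real.norm_eq_abs, abs_of_nonneg hl0.le]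
      refine (add_le_add e1 e2).trans ?_
      rw [hKdef]
      clear_value a b
      nlinarith [mul_le_mul_of_nonneg_right hll ha0, mul_le_mul_of_nonneg_right hll hb0,
        mul_le_mul_of_nonneg_right (mul_le_mul_of_nonneg_right hll hM0) hb0,
        mul_nonneg (mul_nonneg hlam₀.le hM0) ha0,
        mul_nonneg hlam₀.le hb0, mul_nonneg hlam₀.le ha0,
        mul_nonneg (mul_nonneg hlam₀.le hM0) hb0]
    have hP2 : pnorm (Fvec G γ u v) ≤ L * (a + b) := by
      refine (pnorm_le' _).trans ?_
      have e1 : ‖(Fvec G γ u v).1‖ = b := by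
        rw [hbdef]; simp [Fvec]
      have e2 : ‖(Fvec G γ u v).2‖ ≤ γ * b + a := by
        simp only [Fvec, ← hgdef, hadef, hbdef]
        refine (norm_add_le _ _).trans ?_
        rw [norm_smul, Real.norm_eq_abs, abs_of_nonneg hγ.le]
      rw [e1, hLdef]
      refine (add_le_add_right e2 b).trans ?_
      clear_value a b
      nlinarith [mul_nonneg hγ.le ha0]
    exact arith1 γ lam K L m _ _ a b _ hγ hl0 hK0 hL0 hmdef ha0 hb0
      (pnorm_nonneg' _) (pnorm_nonneg' _) hP1 hP2 hkey
  · -- part (2)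
    rintro lam ⟨hl0, hl⟩ u v hu
    constructor
    · intro h
      have hz : pinner (gradElam G lam u v) (Fvec G γ u v) = 0 := by
        rw [h]; simp [pinner]
      have hk := key lam hl0 hl u hu v
      rw [hz] at hk
      have hv : v = 0 := by
        rw [← norm_eq_zero]
        set a := ‖gradient G u‖ with hadef
        set b := ‖v‖ with hbdef
        have ha0 : 0 ≤ a := norm_nonneg _
        have hb0 : 0 ≤ b := norm_nonneg _
        clear_value a b
        have hb2 : b^2 ≤ 0 := by nlinarith [mul_nonneg hl0 (sq_nonneg a)]
        have : b^2 = 0 := le_antisymm hb2 (sq_nonneg b)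
        exact (pow_eq_zero_iff two_ne_zero).mp this
      subst hv
      have h1 : gradient G u + lam • (fderiv ℝ (gradient G) u 0) = 0 := congrArg Prod.fst h
      rw [map_zero, smul_zero, add_zero] at h1
      have : Fvec G γ u 0 = (-0, γ • (0:EuclideanSpace ℝ (Fin N)) + gradient G u) := rfl
      rw [this, h1]
      simp
    · intro h
      have h1 : -v = 0 := congrArg Prod.fst h
      have hv : v = 0 := by simpa using h1
      subst hv
      have h2 : γ • (0 : EuclideanSpace ℝ (Fin N)) + gradient G u = 0 := congrArg Prod.snd h
      rw [smul_zero, zero_add] at h2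
      have : gradElam G lam u 0 =
          (gradient G u + lam • (fderiv ℝ (gradient G) u 0), 0 + lam • gradient G u) := rfl
      rw [this, h2, map_zero]
      simp
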